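/- Let f ≥ 1 and n₁, …, n_f ≥ 1 be integers. Let 𝔱* = { y = (y₁,…,y_f) : y_i ∈ ℝ^{n_i} and y_{i1} + ⋯ + y_{i n_i} = 0 for each i }, and let W = S_{n₁} × ⋯ × S_{n_f} act on 𝔱* by permuting the coordinates within each block. Let C⁺ = { y ∈ 𝔱* : for every i and every 1 ≤ j < n_i, the partial sum y_{i1} + ⋯ + y_{ij} is strictly positive } (the interior of the cone generated by the positive weights). Suppose K ⊆ 𝔱* is a convex set such that for every σ ∈ W the set K meets σ·C⁺, i.e., K ∩ σ·C⁺ ≠ ∅. Then K contains a neighborhood of the origin of 𝔱*: there exists r > 0 such that every y ∈ 𝔱* with ‖y‖ < r lies in K. (This is the content of Lemma (1.3): a convex hull Conv_x that contains an interior point of every Weyl translate of the positive-weight cone contains a neighborhood of the origin.) -/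

import Mathlib

set_option maxHeartbeats 1000000

open Finset

/-- Abel summation positivity: nonincreasing weights against positive partial sums. -/
private lemma abel_nonneg (N : ℕ) (b Y : ℕ → ℝ)
    (hb : ∀ k, k + 1 < N → b (k + 1) ≤ b k)
    (hsum : ∑ j ∈ Finset.range N, Y j = 0)
    (hpos : ∀ m, 1 ≤ m → m < N → 0 < ∑ j ∈ Finset.range m, Y j) :
    0 ≤ ∑ j ∈ Finset.range N, b j * Y j ∧
      (∀ k, k + 1 < N → b (k + 1) < b k → 0 < ∑ j ∈ Finset.range N, b j * Y j) := by
  have habel := Finset.sum_range_by_parts b Y N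
  simp only [smul_eq_mul, hsum, mul_zero, zero_sub] at habel
  have hterm : ∀ i ∈ Finset.range (N - 1),
      (b (i + 1) - b i) * ∑ j ∈ Finset.range (i + 1), Y j ≤ 0 := by
    intro i hi
    rw [Finset.mem_range] at hi
    have h1 : i + 1 < N := by omega
    have h2 : b (i + 1) - b i ≤ 0 := by linarith [hb i h1]
    exact mul_nonpos_of_nonpos_of_nonneg h2 (hpos (i + 1) (by omega) h1).le
  constructor
  · rw [habel, neg_nonneg]
    exact Finset.sum_nonpos hterm
  · intro k hk hbk
    rw [habel, neg_pos]
    have hkmem : k ∈ Finset.range (N - 1) := Finset.mem_range.2 (by omega)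
    have : ∑ i ∈ Finset.range (N - 1),
        (b (i + 1) - b i) * ∑ j ∈ Finset.range (i + 1), Y j
        < ∑ _i ∈ Finset.range (N - 1), (0 : ℝ) := by
      refine Finset.sum_lt_sum hterm ⟨k, hkmem, ?_⟩
      exact mul_neg_of_neg_of_pos (by linarith) (hpos (k + 1) (by omega) (by omega))
    simpa using this

/-- Converting a partial `Fin` sum to a `range` sum. -/
private lemma sum_filter_eq_sum_range {N : ℕ} (g : Fin N → ℝ) (m : ℕ) (hm : m ≤ N) :
    ∑ l ∈ Finset.univ.filter (fun l : Fin N => (l : ℕ) < m), g l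
      = ∑ j ∈ Finset.range m, (if h : j < N then g ⟨j, h⟩ else 0) := by
  rw [Finset.sum_filter]
  have h1 : (∑ l : Fin N, if (l : ℕ) < m then g l else 0)
      = ∑ j ∈ Finset.range N, (if j < m then (if h : j < N then g ⟨j, h⟩ else 0) else 0) := by
    rw [← Fin.sum_univ_eq_sum_range]
    refine Finset.sum_congr rfl fun l _ => ?_
    by_cases h : (l : ℕ) < m <;> simp [h, l.isLt]
  rw [h1, ← Finset.sum_subset (Finset.range_subset_range.2 hm)
    (fun x _ hxm => if_neg (by simpa using hxm))]
  refine Finset.sum_congr rfl fun j hj => ?_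
  rw [if_pos (Finset.mem_range.1 hj)]

/-- If all adjacent steps (within a window) go weakly up, the sequence is monotone there. -/
private lemma no_descent_le (N : ℕ) (c : ℕ → ℝ)
    (h : ∀ m, m + 1 < N → c m ≤ c (m + 1))
    (p q : ℕ) (hpq : p ≤ q) (hq : q < N) : c p ≤ c q := by
  obtain ⟨d, rfl⟩ := Nat.exists_eq_add_of_le hpq
  clear hpq
  induction d with
  | zero => simp
  | succ d ih =>
      have h1 : c p ≤ c (p + d) := ih (by omega)
      have h2 : c (p + d) ≤ c (p + d + 1) := h (p + d) (by omega)
      calc c p ≤ c (p + d) := h1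
        _ ≤ c (p + (d + 1)) := by rw [show p + (d + 1) = p + d + 1 by ring]; exact h2

/-- The trace-zero subspace. -/
private def traceZeroSubmodule (f : ℕ) (n : Fin f → ℕ) :
    Submodule ℝ ((i : Fin f) → Fin (n i) → ℝ) where
  carrier := {y | ∀ i, ∑ j, y i j = 0}
  add_mem' := fun {a b} ha hb i => by
    simp [Finset.sum_add_distrib, ha i, hb i]
  zero_mem' := fun i => by simp
  smul_mem' := fun c y hy i => by
    simp [← Finset.mul_sum, hy i]

/-- Projection of the ambient space onto the trace-zero subspace. -/
private noncomputable def traceZeroProj (f : ℕ) (n : Fin f → ℕ) (hn : ∀ i, 1 ≤ n i) :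
    ((i : Fin f) → Fin (n i) → ℝ) →ₗ[ℝ] traceZeroSubmodule f n where
  toFun y := ⟨fun i j => y i j - (∑ k, y i k) / n i, by
    intro i
    have hni : (n i : ℝ) ≠ 0 := by
      have := hn i; positivity
    simp only [Finset.sum_sub_distrib, Finset.sum_const, Finset.card_univ, Fintype.card_fin,
      nsmul_eq_mul]
    field_simp
    ring⟩
  map_add' x y := by
    apply Subtype.ext
    funext i j
    simp only [Submodule.coe_add, Pi.add_apply, Finset.sum_add_distrib]
    ring
  map_smul' c x := by
    apply Subtype.ext
    funext i j
    simp only [RingHom.id_apply, SetLike.val_smul, Pi.smul_apply, smul_eq_mul,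
      ← Finset.mul_sum]
    ring

private lemma traceZeroProj_mem {f : ℕ} {n : Fin f → ℕ} (hn : ∀ i, 1 ≤ n i)
    (y : (i : Fin f) → Fin (n i) → ℝ)
    (hy : ∀ i, ∑ j, y i j = 0) : (traceZeroProj f n hn y : (i : Fin f) → Fin (n i) → ℝ) = y := by
  funext i j
  simp [traceZeroProj, hy i]

/-- The standard basis vectors of the double pi type. -/
private def stdBasisVec (f : ℕ) (n : Fin f → ℕ) (i : Fin f) (j : Fin (n i)) :
    (i : Fin f) → Fin (n i) → ℝ :=
  Pi.single i (Pi.single j 1)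

/-- Every linear functional on the pi space is given by its values on the standard basis. -/
private lemma rep_lemma {f : ℕ} {n : Fin f → ℕ}
    (G : ((i : Fin f) → Fin (n i) → ℝ) →ₗ[ℝ] ℝ) (y : (i : Fin f) → Fin (n i) → ℝ) :
    G y = ∑ i, ∑ j, y i j * G (stdBasisVec f n i j) := by
  have hy : y = ∑ i, ∑ j, y i j • stdBasisVec f n i j := by
    funext i0 j0
    simp only [Finset.sum_apply, Pi.smul_apply, smul_eq_mul, stdBasisVec]
    rw [Finset.sum_eq_single i0 (fun i _ hne => ?_) (by simp)]
    · simp [Pi.single_apply]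
    · simp [Pi.single_eq_of_ne (Ne.symm hne)]
  conv_lhs => rw [hy]
  rw [map_sum]
  refine Finset.sum_congr rfl fun i _ => ?_
  rw [map_sum]
  refine Finset.sum_congr rfl fun j _ => ?_
  rw [map_smul, smul_eq_mul]

/-- Lemma (1.3), abstract form: if a convex set `K` contained in the trace-zero space
`𝔱* = {y : ∀ i, ∑ j, y i j = 0}` meets every Weyl translate `σ·C⁺` of the interior `C⁺`
of the positive-weight cone (the set of trace-zero vectors all of whose proper initial
partial sums are strictly positive), then `K` contains a neighborhood of the origin
of `𝔱*`. -/
theorem convex_mem_nhds_zero_of_meets_weyl_translates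
    (f : ℕ) (n : Fin f → ℕ) (hn : ∀ i, 1 ≤ n i)
    (K : Set ((i : Fin f) → Fin (n i) → ℝ))
    (hKsub : ∀ y ∈ K, ∀ i, ∑ j, y i j = 0)
    (hKconv : Convex ℝ K)
    (hmeet : ∀ σ : (i : Fin f) → Equiv.Perm (Fin (n i)),
      ∃ y : (i : Fin f) → Fin (n i) → ℝ,
        (fun i l => y i (σ i l)) ∈ K ∧
        (∀ i, ∑ j, y i j = 0) ∧
        (∀ i, ∀ m : ℕ, 1 ≤ m → m < n i →
          0 < ∑ l ∈ Finset.univ.filter (fun l : Fin (n i) => (l : ℕ) < m), y i l)) :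
    ∃ r > 0, ∀ y : (i : Fin f) → Fin (n i) → ℝ,
      (∀ i, ∑ j, y i j = 0) → ‖y‖ < r → y ∈ K := by
  classical
  set T := traceZeroSubmodule f n with hT
  set K' : Set T := Subtype.val ⁻¹' K with hK'
  have hK'conv : Convex ℝ K' := hKconv.linear_preimage T.subtype
  -- K' is nonempty
  obtain ⟨y0, hy0K, hy00, -⟩ := hmeet (fun i => 1)
  have hk0mem : y0 ∈ T := hy00
  have hk0 : (⟨y0, hk0mem⟩ : T) ∈ K' := by
    have h : (fun i l => y0 i ((1 : Equiv.Perm (Fin (n i))) l)) = y0 := rfl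
    rw [hK']; simpa [Set.mem_preimage] using (h ▸ hy0K)
  -- The key positivity consequence of `hmeet`:
  -- every nonzero functional on `T` is positive somewhere on `K'`.
  have key : ∀ φ : Module.Dual ℝ T, φ ≠ 0 → ∃ x ∈ K', 0 < φ x := by
    intro φ hφ
    set G := φ ∘ₗ traceZeroProj f n hn with hGdef
    set a : (i : Fin f) → Fin (n i) → ℝ := fun i j => G (stdBasisVec f n i j) with ha
    set τ : (i : Fin f) → Equiv.Perm (Fin (n i)) := fun i => Tuple.sort (fun j => -(a i j))
      with hτ
    have hmono : ∀ i, Monotone ((fun j => -(a i j)) ∘ (τ i)) := fun i => Tuple.monotone_sort _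
    obtain ⟨y, hyK, hy0, hypos⟩ := hmeet (fun i => (τ i)⁻¹)
    set x : (i : Fin f) → Fin (n i) → ℝ := fun i l => y i ((τ i)⁻¹ l) with hx
    have hxT : ∀ i, ∑ j, x i j = 0 := fun i => by
      rw [hx]; rw [← hy0 i]; exact Equiv.sum_comp ((τ i)⁻¹) (y i)
    have hxK' : (⟨x, hxT⟩ : T) ∈ K' := by
      rw [hK']; exact hyK
    refine ⟨⟨x, hxT⟩, hxK', ?_⟩
    -- φ evaluated at x
    have hGx : φ (⟨x, hxT⟩ : T) = ∑ i, ∑ j, a i j * x i j := by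
      have h1 : traceZeroProj f n hn x = (⟨x, hxT⟩ : T) :=
        Subtype.ext (traceZeroProj_mem hn x hxT)
      have h2 : φ (⟨x, hxT⟩ : T) = G x := by rw [hGdef]; simp [h1]
      rw [h2, rep_lemma]
      exact Finset.sum_congr rfl fun i _ => Finset.sum_congr rfl fun j _ => mul_comm _ _
    rw [hGx]
    -- per-block estimates
    have hblock : ∀ i : Fin f,
        0 ≤ ∑ j, a i j * x i j ∧
        ((∃ j k : Fin (n i), a i j ≠ a i k) → 0 < ∑ j, a i j * x i j) := by
      intro i
      set N := n i with hN
      set bN : ℕ → ℝ := fun m => if h : m < N then a i (τ i ⟨m, h⟩) else 0 with hbN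
      set YN : ℕ → ℝ := fun m => if h : m < N then y i ⟨m, h⟩ else 0 with hYN
      have hsum_eq : ∑ j, a i j * x i j = ∑ j ∈ Finset.range N, bN j * YN j := by
        have e1 : ∑ j, a i j * x i j = ∑ m, a i (τ i m) * y i m := by
          rw [← Equiv.sum_comp (τ i) (fun j => a i j * x i j)]
          refine Finset.sum_congr rfl fun m _ => ?_
          rw [hx]
          simp
        rw [e1, ← Fin.sum_univ_eq_sum_range (fun j => bN j * YN j) N]
        refine Finset.sum_congr rfl fun m _ => ?_
        rw [hbN, hYN]
        simp [m.isLt]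
      have hb : ∀ k, k + 1 < N → bN (k + 1) ≤ bN k := by
        intro k hk
        have h1 : (⟨k, by omega⟩ : Fin N) ≤ ⟨k + 1, hk⟩ := by
          simp [Fin.mk_le_mk]
        have h2 := hmono i h1
        simp only [Function.comp_apply, neg_le_neg_iff] at h2
        rw [hbN]
        simp only [hk, dif_pos, show k < N by omega]
        exact h2
      have hsum : ∑ j ∈ Finset.range N, YN j = 0 := by
        rw [← Fin.sum_univ_eq_sum_range YN N, ← hy0 i]
        refine Finset.sum_congr rfl fun m _ => ?_
        rw [hYN]; simp [m.isLt]
      have hpos : ∀ m, 1 ≤ m → m < N → 0 < ∑ j ∈ Finset.range m, YN j := by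
        intro m h1m hmN
        have h3 := hypos i m h1m hmN
        rw [sum_filter_eq_sum_range (y i) m hmN.le] at h3
        exact h3
      obtain ⟨hnn, hstrict⟩ := abel_nonneg N bN YN hb hsum hpos
      refine ⟨by rw [hsum_eq]; exact hnn, ?_⟩
      rintro ⟨j, k, hjk⟩
      -- find an adjacent strict descent of bN
      have hdesc : ∃ m, m + 1 < N ∧ bN (m + 1) < bN m := by
        by_contra hno
        push_neg at hno
        have hmonoN : ∀ p q : ℕ, p ≤ q → q < N → bN p = bN q := by
          intro p q hpq hq
          have h1 : bN p ≤ bN q := no_descent_le N bN hno p q hpq hq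
          have h2 : bN q ≤ bN p := by
            have := no_descent_le N (fun m => -bN m)
              (fun m hm => by simpa using hb m hm) p q hpq hq
            simpa using this
          linarith
        set j' : Fin N := (τ i)⁻¹ j with hj'
        set k' : Fin N := (τ i)⁻¹ k with hk'
        have hbj : bN (j' : ℕ) = a i j := by
          rw [hbN]; simp [hj']
        have hbk : bN (k' : ℕ) = a i k := by
          rw [hbN]; simp [hk']
        have hne : bN (j' : ℕ) ≠ bN (k' : ℕ) := by rw [hbj, hbk]; exact hjk
        rcases le_total (j' : ℕ) (k' : ℕ) with h | h
        · exact hne (hmonoN _ _ h k'.isLt)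
        · exact hne ((hmonoN _ _ h j'.isLt).symm)
      obtain ⟨m, hm1, hm2⟩ := hdesc
      rw [hsum_eq]
      exact hstrict m hm1 hm2
    -- combine: either `a` is blockwise constant (then φ = 0), or some block is strict
    by_cases hconst : ∀ i, ∀ j k : Fin (n i), a i j = a i k
    · exfalso
      apply hφ
      apply LinearMap.ext
      intro z
      have hz : ∀ i, ∑ jj, (z : (i : Fin f) → Fin (n i) → ℝ) i jj = 0 := z.2
      have h1 : traceZeroProj f n hn (z : (i : Fin f) → Fin (n i) → ℝ) = z :=
        Subtype.ext (traceZeroProj_mem hn _ hz)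
      have h2 : φ z = G (z : (i : Fin f) → Fin (n i) → ℝ) := by rw [hGdef]; simp [h1]
      rw [LinearMap.zero_apply, h2, rep_lemma]
      refine Finset.sum_eq_zero fun i _ => ?_
      have h3 : ∀ j : Fin (n i),
          (z : (i : Fin f) → Fin (n i) → ℝ) i j * G (stdBasisVec f n i j)
            = (z : (i : Fin f) → Fin (n i) → ℝ) i j * a i ⟨0, hn i⟩ := by
        intro j
        rw [show G (stdBasisVec f n i j) = a i j from rfl, hconst i j ⟨0, hn i⟩]
      rw [Finset.sum_congr rfl fun j _ => h3 j, ← Finset.sum_mul, hz i, zero_mul]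
    · push_neg at hconst
      obtain ⟨i0, j, k, hjk⟩ := hconst
      exact Finset.sum_pos' (fun i _ => (hblock i).1)
        ⟨i0, Finset.mem_univ _, (hblock i0).2 ⟨j, k, hjk⟩⟩
  -- Now show 0 is in the interior of K' using separation.
  have hint : (0 : T) ∈ interior K' := by
    by_contra h0
    by_cases hspan : affineSpan ℝ K' = ⊤
    · have hne : (interior K').Nonempty :=
        hK'conv.interior_nonempty_iff_affineSpan_eq_top.2 hspan
      obtain ⟨g, hg⟩ := geometric_hahn_banach_open_point hK'conv.interior isOpen_interior h0
      simp only [map_zero] at hg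
      have hgne : (g : T →ₗ[ℝ] ℝ) ≠ 0 := by
        intro hzero
        obtain ⟨w, hw⟩ := hne
        have := hg w hw
        rw [show g w = (g : T →ₗ[ℝ] ℝ) w from rfl, hzero] at this
        simpa using this
      have hgle : ∀ z ∈ K', g z ≤ 0 := by
        intro z hz
        obtain ⟨w, hw⟩ := hne
        have hseg : ∀ t : ℝ, t ∈ Set.Ioc (0:ℝ) 1 → g (t • w + (1 - t) • z) ≤ 0 := by
          intro t ht
          have hmem : t • w + (1 - t) • z ∈ interior K' :=
            hK'conv.combo_interior_closure_mem_interior hw (subset_closure hz)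
              ht.1 (by linarith [ht.2]) (by ring)
          exact (hg _ hmem).le
        have hcont : Filter.Tendsto (fun t : ℝ => g (t • w + (1 - t) • z)) (nhdsWithin 0 (Set.Ioi 0))
            (nhds (g z)) := by
          have hc : Continuous fun t : ℝ => g (t • w + (1 - t) • z) :=
            g.continuous.comp ((continuous_id.smul continuous_const).add
              ((continuous_const.sub continuous_id).smul continuous_const))
          have := hc.tendsto 0
          simp only [zero_smul, sub_zero, one_smul, zero_add] at this
          exact this.mono_left nhdsWithin_le_nhds
        refine le_of_tendsto hcont ?_
        filter_upwards [Ioc_mem_nhdsGT (zero_lt_one)] with t ht using hseg t ht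
      obtain ⟨z, hz, hzpos⟩ := key g hgne
      have hcoe : ((g : T →ₗ[ℝ] ℝ) z : ℝ) = g z := rfl
      linarith [hgle z hz, hcoe]
    · -- affine span is proper: get a functional constant on K'
      have hk0span : (⟨y0, hk0mem⟩ : T) ∈ affineSpan ℝ K' := subset_affineSpan ℝ K' hk0
      have hdir : (affineSpan ℝ K').direction ≠ ⊤ := by
        intro htop
        exact hspan (AffineSubspace.direction_eq_top_iff_of_nonempty ⟨_, hk0span⟩ |>.1 htop)
      obtain ⟨φ, hφ0, hker⟩ :=
        Submodule.exists_le_ker_of_lt_top (affineSpan ℝ K').direction (lt_top_iff_ne_top.2 hdir)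
      have hconstK : ∀ z ∈ K', φ z = φ (⟨y0, hk0mem⟩ : T) := by
        intro z hz
        have hmem : z -ᵥ (⟨y0, hk0mem⟩ : T) ∈ (affineSpan ℝ K').direction :=
          AffineSubspace.vsub_mem_direction (subset_affineSpan ℝ K' hz) hk0span
        have := hker hmem
        rw [LinearMap.mem_ker] at this
        have h2 : φ (z - (⟨y0, hk0mem⟩ : T)) = 0 := this
        rw [map_sub] at h2
        linarith
      rcases le_or_gt (φ (⟨y0, hk0mem⟩ : T)) 0 with hc | hc
      · obtain ⟨z, hz, hzpos⟩ := key φ hφ0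
        rw [hconstK z hz] at hzpos
        linarith
      · obtain ⟨z, hz, hzpos⟩ := key (-φ) (by simpa using (neg_ne_zero.2 hφ0))
        rw [LinearMap.neg_apply, hconstK z hz] at hzpos
        linarith
  -- conclude
  rw [mem_interior_iff_mem_nhds, Metric.mem_nhds_iff] at hint
  obtain ⟨ε, hε, hball⟩ := hint
  refine ⟨ε, hε, fun y hy hnorm => ?_⟩
  have hyT : y ∈ T := hy
  have hmem : (⟨y, hyT⟩ : T) ∈ Metric.ball (0 : T) ε := by
    rw [mem_ball_zero_iff]
    exact hnorm
  exact hball hmem
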